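/- Every positive integer N has a unique representation N = Σ_{k=1}^ℓ c_k q_{k-1} where q_k are the denominators of the continued fraction of √2 - 1 (so q_0 = 1, q_1 = 2, q_k = 2 q_{k-1} + q_{k-2}), with digits c_k ∈ {0,1,2}, c_1 ≤ 1, and c_k = 2 implying c_{k-1} = 0. -/

import Mathlib

/-- Pell numbers. -/
def silverP : ℕ → ℕ
  | 0 => 0
  | 1 => 1
  | (n+2) => 2 * silverP (n+1) + silverP n

lemma silverP_rec (n : ℕ) : silverP (n+2) = 2 * silverP (n+1) + silverP n := rfl

lemma silverP_lt_succ (k : ℕ) : silverP k < silverP (k+1) := by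
  induction k using Nat.strong_induction_on with
  | _ k ih =>
    match k with
    | 0 => simp [silverP]
    | (n+1) =>
      have h := ih n (by omega)
      rw [silverP_rec]
      omega

lemma silverP_strictMono : StrictMono silverP :=
  strictMono_nat_of_lt_succ silverP_lt_succ

lemma silverP_mono : Monotone silverP := silverP_strictMono.monotone

lemma silverP_ge (k : ℕ) : k ≤ silverP k := by
  induction k with
  | zero => simp
  | succ n ih => have := silverP_lt_succ n; omega

/-- validity of a digit sequence -/
def silverOK (c : ℕ → ℕ) : Prop :=
  c 0 = 0 ∧ c 1 ≤ 1 ∧ (∀ k, c k ≤ 2) ∧ ∀ k, 2 ≤ k → c k = 2 → c (k - 1) = 0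

lemma silver_sum_lt : ∀ n, 1 ≤ n → ∀ c : ℕ → ℕ, silverOK c →
    ∑ k ∈ Finset.range n, c k * silverP k < silverP n := by
  intro n
  induction n using Nat.strong_induction_on with
  | _ n ih =>
    match n with
    | 0 => intro h; omega
    | 1 =>
      intro _ c hc
      rw [Finset.sum_range_one, hc.1]
      simp [silverP]
    | (n+2) =>
      intro _ c hc
      obtain ⟨h0, h1, h2, h3⟩ := hc
      rw [Finset.sum_range_succ]
      have hP := silverP_rec n
      rcases Nat.lt_or_ge (c (n+1)) 2 with hlt | hge
      · have A := ih (n+1) (by omega) (by omega) c ⟨h0, h1, h2, h3⟩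
        have B : c (n+1) * silverP (n+1) ≤ 1 * silverP (n+1) :=
          Nat.mul_le_mul_right _ (by omega)
        rw [one_mul] at B
        omega
      · have hc2 : c (n+1) = 2 := le_antisymm (h2 (n+1)) hge
        rcases Nat.eq_zero_or_pos n with rfl | hn
        · simp only [Nat.zero_add] at hc2; omega
        · have hz : c n = 0 := by
            have := h3 (n+1) (by omega) hc2
            simpa using this
          have A := ih n (by omega) hn c ⟨h0, h1, h2, h3⟩
          rw [Finset.sum_range_succ, hz, zero_mul, add_zero] at *
          rw [hc2]
          omega

lemma silver_sum_ext {c : ℕ → ℕ} {m n : ℕ} (h : m ≤ n) (hb : ∀ k, m ≤ k → c k = 0) :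
    ∑ k ∈ Finset.range n, c k * silverP k = ∑ k ∈ Finset.range m, c k * silverP k := by
  refine (Finset.sum_subset (Finset.range_subset_range.2 h) ?_).symm
  intro x _ hx
  rw [hb x (by simpa using hx), zero_mul]

lemma silver_exists : ∀ N : ℕ, ∃ c : ℕ → ℕ, silverOK c ∧
    (∀ k, c k ≠ 0 → 1 ≤ k ∧ silverP k ≤ N) ∧
    ∑ k ∈ Finset.range (N+1), c k * silverP k = N := by
  intro N
  induction N using Nat.strong_induction_on with
  | _ N ih =>
    rcases Nat.eq_zero_or_pos N with rfl | hN
    · exact ⟨fun _ => 0, ⟨rfl, by norm_num, fun _ => by norm_num, fun k _ h => by norm_num at h⟩,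
        fun k hk => absurd rfl hk, by simp⟩
    · have hP1N : silverP 1 ≤ N := by rw [show silverP 1 = 1 from rfl]; exact hN
      obtain ⟨n, hn1, hPn, hN1⟩ : ∃ n, 1 ≤ n ∧ silverP n ≤ N ∧ N < silverP (n+1) := by
        refine ⟨Nat.findGreatest (fun n => silverP n ≤ N) N,
          Nat.le_findGreatest hN hP1N,
          Nat.findGreatest_spec (P := fun n => silverP n ≤ N) (m := 1) hN hP1N, ?_⟩
        by_cases h : Nat.findGreatest (fun n => silverP n ≤ N) N + 1 ≤ N
        · have := Nat.findGreatest_is_greatest (P := fun n => silverP n ≤ N)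
            (n := N) (k := Nat.findGreatest (fun n => silverP n ≤ N) N + 1) (by omega) h
          omega
        · have := silverP_ge (Nat.findGreatest (fun n => silverP n ≤ N) N + 1)
          omega
      have hPpos : 0 < silverP n := lt_of_lt_of_le hn1 (silverP_ge n)
      obtain ⟨j, rfl⟩ : ∃ j, n = j + 1 := ⟨n - 1, by omega⟩
      obtain ⟨d, r, hdm, hr, hd1⟩ :
          ∃ d r, silverP (j+1) * d + r = N ∧ r < silverP (j+1) ∧ 1 ≤ d :=
        ⟨N / silverP (j+1), N % silverP (j+1), Nat.div_add_mod N (silverP (j+1)),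
          Nat.mod_lt _ hPpos, (Nat.one_le_div_iff hPpos).2 hPn⟩
      have hN1' : N < 2 * silverP (j + 1) + silverP j := by
        have h := silverP_rec j
        have : N < silverP (j + 2) := hN1
        omega
      have hle : silverP j ≤ silverP (j+1) := silverP_mono (by omega)
      have hd2 : d ≤ 2 := by
        by_contra h
        push_neg at h
        have h3 : silverP (j+1) * 3 ≤ silverP (j+1) * d :=
          Nat.mul_le_mul_left _ (by omega)
        omega
      have hd1' : j = 0 → d ≤ 1 := by
        intro hj; subst hj
        have e1 : silverP (0 + 1) = 1 := rfl
        have e2 : silverP (0 + 1 + 1) = 2 := rfl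
        rw [e1, one_mul] at hdm
        omega
      have hd2' : d = 2 → r < silverP j := by
        intro h; subst h; omega
      have hrN : r < N := by
        have h1 : silverP (j+1) * 1 ≤ silverP (j+1) * d := Nat.mul_le_mul_left _ hd1
        omega
      obtain ⟨c', hOK', hsupp', hsum'⟩ := ih r hrN
      have hc'n : c' (j+1) = 0 := by
        by_contra h
        have := (hsupp' _ h).2
        omega
      refine ⟨fun k => c' k + if k = j + 1 then d else 0, ⟨?_, ?_, ?_, ?_⟩, ?_, ?_⟩
      · simp [hOK'.1]
      · rcases Nat.eq_zero_or_pos j with rfl | hj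
        · simpa [hc'n] using hd1' rfl
        · have : (1 : ℕ) ≠ j + 1 := by omega
          simpa [this, hj.ne'] using hOK'.2.1
      · intro k
        rcases eq_or_ne k (j+1) with rfl | hk
        · simp [hc'n, hd2]
        · simpa [hk] using hOK'.2.2.1 k
      · intro k hk hck
        rcases eq_or_ne k (j+1) with rfl | hk'
        · have hd2now : d = 2 := by simpa [hc'n] using hck
          have hcj : c' j = 0 := by
            by_contra h
            have := (hsupp' _ h).2
            have := hd2' hd2now
            omega
          have : j + 1 - 1 ≠ j + 1 := by omega
          simpa [this, hcj]
        · have hck' : c' k = 2 := by simpa [hk'] using hck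
          have hk1 : k - 1 ≠ j + 1 := by
            intro h
            have h2 := (hsupp' k (by omega)).2
            have : silverP (j+1) < silverP k := silverP_strictMono (by omega)
            omega
          have := hOK'.2.2.2 k hk hck'
          simpa [hk1] using this
      · intro k hk
        rcases eq_or_ne k (j+1) with rfl | hk'
        · exact ⟨by omega, hPn⟩
        · have h := hsupp' k (by simpa [hk'] using hk)
          exact ⟨h.1, le_trans h.2 (le_of_lt hrN)⟩
      · rw [Finset.sum_congr rfl (fun x _ => by rw [add_mul, ite_mul, zero_mul]),
          Finset.sum_add_distrib]
        have e1 : ∑ k ∈ Finset.range (N+1), c' k * silverP k = r := by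
          rw [silver_sum_ext (m := r+1) (by omega)
            (fun k hk => by
              by_contra h
              have h2 := (hsupp' k h).2
              have := silverP_ge k
              omega)]
          exact hsum'
        have e2 : ∑ k ∈ Finset.range (N+1),
            (if k = j + 1 then d * silverP k else 0) = d * silverP (j+1) := by
          rw [Finset.sum_ite_eq' (Finset.range (N+1)) (j+1) (fun k => d * silverP k)]
          have : j + 1 ∈ Finset.range (N+1) := by
            have := silverP_ge (j+1)
            simp only [Finset.mem_range]
            omega
          simp [this]
        rw [e1, e2]
        have hcomm : d * silverP (j+1) = silverP (j+1) * d := Nat.mul_comm _ _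
        omega

lemma silver_unique : ∀ n (c d : ℕ → ℕ), silverOK c → silverOK d →
    (∀ k, n ≤ k → c k = 0) → (∀ k, n ≤ k → d k = 0) →
    (∑ k ∈ Finset.range n, c k * silverP k = ∑ k ∈ Finset.range n, d k * silverP k) →
    ∀ k, c k = d k := by
  intro n
  induction n with
  | zero => intro c d _ _ hc hd _ k; rw [hc k (Nat.zero_le _), hd k (Nat.zero_le _)]
  | succ n ih =>
    intro c d hc hd hzc hzd hsum
    rw [Finset.sum_range_succ, Finset.sum_range_succ] at hsum
    have hcd : c n = d n := by
      rcases Nat.eq_zero_or_pos n with rfl | hn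
      · rw [hc.1, hd.1]
      · have A := silver_sum_lt n hn c hc
        have B := silver_sum_lt n hn d hd
        rcases Nat.lt_trichotomy (c n) (d n) with h | h | h
        · exfalso
          have h1 : c n * silverP n + 1 * silverP n ≤ d n * silverP n := by
            rw [← add_mul]; exact Nat.mul_le_mul_right _ (by omega)
          rw [one_mul] at h1
          omega
        · exact h
        · exfalso
          have h1 : d n * silverP n + 1 * silverP n ≤ c n * silverP n := by
            rw [← add_mul]; exact Nat.mul_le_mul_right _ (by omega)
          rw [one_mul] at h1
          omega
    have hsum' : ∑ k ∈ Finset.range n, c k * silverP k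
        = ∑ k ∈ Finset.range n, d k * silverP k := by
      rw [hcd] at hsum
      omega
    set c' := fun k => if k = n then 0 else c k with hc'
    set d' := fun k => if k = n then 0 else d k with hd'
    have hOKc' : silverOK c' := by
      refine ⟨?_, ?_, ?_, ?_⟩
      · simp only [hc']; split <;> simp [hc.1]
      · simp only [hc']; split <;> simp [hc.2.1]
      · intro k; simp only [hc']; split <;> simp [hc.2.2.1]
      · intro k hk hk2
        simp only [hc'] at hk2 ⊢
        split at hk2
        · omega
        · have := hc.2.2.2 k hk hk2
          split <;> simp [this]
    have hOKd' : silverOK d' := by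
      refine ⟨?_, ?_, ?_, ?_⟩
      · simp only [hd']; split <;> simp [hd.1]
      · simp only [hd']; split <;> simp [hd.2.1]
      · intro k; simp only [hd']; split <;> simp [hd.2.2.1]
      · intro k hk hk2
        simp only [hd'] at hk2 ⊢
        split at hk2
        · omega
        · have := hd.2.2.2 k hk hk2
          split <;> simp [this]
    have hec : ∑ k ∈ Finset.range n, c' k * silverP k
        = ∑ k ∈ Finset.range n, c k * silverP k :=
      Finset.sum_congr rfl (fun x hx => by
        have : x ≠ n := by have := Finset.mem_range.1 hx; omega
        simp [hc', this])
    have hed : ∑ k ∈ Finset.range n, d' k * silverP k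
        = ∑ k ∈ Finset.range n, d k * silverP k :=
      Finset.sum_congr rfl (fun x hx => by
        have : x ≠ n := by have := Finset.mem_range.1 hx; omega
        simp [hd', this])
    have key := ih c' d' hOKc' hOKd'
      (fun k hk => by
        rcases eq_or_ne k n with rfl | h
        · simp [hc']
        · simp only [hc', if_neg h]; exact hzc k (by omega))
      (fun k hk => by
        rcases eq_or_ne k n with rfl | h
        · simp [hd']
        · simp only [hd', if_neg h]; exact hzd k (by omega))
      (by rw [hec, hed]; exact hsum')
    intro k
    rcases eq_or_ne k n with rfl | h
    · exact hcd
    · have := key k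
      simpa [hc', hd', h] using this

/-- Unique base-(√2 - 1) expansion: `q k` denotes the paper's `q_{k-1}`, the
Pell denominators `q 1 = 1, q 2 = 2, q (k+2) = 2 q (k+1) + q k`.  Digits are
encoded as a finitely supported sequence `c` with `c 0 = 0`. -/
theorem silver_base_expansion (q : ℕ → ℕ)
    (hq0 : q 0 = 0) (hq1 : q 1 = 1)
    (hqrec : ∀ k, q (k + 2) = 2 * q (k + 1) + q k)
    (N : ℕ) (hN : 1 ≤ N) :
    ∃! c : ℕ → ℕ,
      c 0 = 0 ∧ (Function.support c).Finite ∧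
      c 1 ≤ 1 ∧ (∀ k, c k ≤ 2) ∧
      (∀ k, 2 ≤ k → c k = 2 → c (k - 1) = 0) ∧
      N = ∑ᶠ k, c k * q k := by
  have hq : q = silverP := by
    funext k
    induction k using Nat.strong_induction_on with
    | _ k ih =>
      match k with
      | 0 => exact hq0
      | 1 => exact hq1
      | (k+2) => rw [hqrec, silverP_rec, ih (k+1) (by omega), ih k (by omega)]
  subst hq
  obtain ⟨c, hOK, hsupp, hsum⟩ := silver_exists N
  have hcsub : Function.support (fun k => c k * silverP k) ⊆ ↑(Finset.range (N+1)) := by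
    intro k hk
    have hck : c k ≠ 0 := by
      intro h; apply hk; simp [Function.mem_support] at hk ⊢; simp [h]
    have := (hsupp k hck).2
    have := silverP_ge k
    simp only [Finset.coe_range, Set.mem_Iio]
    omega
  refine ⟨c, ⟨hOK.1, ?_, hOK.2.1, hOK.2.2.1, hOK.2.2.2, ?_⟩, ?_⟩
  · apply Set.Finite.subset (Set.finite_Iic N)
    intro k hk
    have := (hsupp k hk).2
    have := silverP_ge k
    simp only [Set.mem_Iic]
    omega
  · rw [finsum_eq_sum_of_support_subset _ hcsub, hsum]
  · rintro c' ⟨h0', hfin', h1', h2', h3', hsum'⟩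
    have hOK' : silverOK c' := ⟨h0', h1', h2', h3'⟩
    -- bound the support of c'
    obtain ⟨m, hm⟩ := hfin'.bddAbove
    set n := max (m + 1) (N + 1) with hn_def
    have hzc' : ∀ k, n ≤ k → c' k = 0 := by
      intro k hk
      by_contra h
      have := hm (Function.mem_support.2 h)
      omega
    have hzc : ∀ k, n ≤ k → c k = 0 := by
      intro k hk
      by_contra h
      have := (hsupp k h).2
      have := silverP_ge k
      omega
    have hs1 : ∑ᶠ k, c' k * silverP k = ∑ k ∈ Finset.range n, c' k * silverP k := by
      apply finsum_eq_sum_of_support_subset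
      intro k hk
      have hck : c' k ≠ 0 := by
        intro h
        simp [Function.mem_support, h] at hk
      simp only [Finset.coe_range, Set.mem_Iio]
      by_contra hkn
      exact hck (hzc' k (by omega))
    have hzcN : ∀ k, N + 1 ≤ k → c k = 0 := by
      intro k hk
      by_contra h
      have := (hsupp k h).2
      have := silverP_ge k
      omega
    have hs2 : ∑ k ∈ Finset.range n, c k * silverP k = N := by
      rw [silver_sum_ext (m := N + 1) (le_max_right _ _) hzcN]
      exact hsum
    have heq : ∑ k ∈ Finset.range n, c' k * silverP k
        = ∑ k ∈ Finset.range n, c k * silverP k := by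
      rw [← hs1, ← hsum', hs2]
    exact funext (silver_unique n c' c hOK' hOK hzc' hzc heq)
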